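/- arXiv:2206.08963 — 3 statements merged into one kernel-verified Lean document; each statement's English description precedes it below -/
import Mathlib

section
/- Suppose there exist functions P : ℝ^n × ℝ^m × {0,...,T−1} → ℝ, R : ℝ^n → ℝ, and for each agent i functions Θ^i (depending only on the states and actions of the agents other than i and on k) and Φ^i (depending only on the terminal states of the agents other than i) such that for every agent i, every k = 0,...,T−1 and all (x, u) ∈ ℝ^n × ℝ^m: L^i(x, u, k) = P(x, u, k) + Θ^i(x^{-i}, u^{-i}, k), and S^i(x^i_T, T) = R(x_T, T) + Φ^i(x^{-i}_T, T) for all x_T ∈ ℝ^n. Then the game is a constrained dynamic potential game with potential (P, R); that is, for every agent i, every pair of strategies γ^i, ν^i of agent i, and every strategy profile γ^{-i} of the other agents: J^i(x_0, (γ^i, γ^{-i})) − J^i(x_0, (ν^i, γ^{-i})) = J(x_0, (γ^i, γ^{-i})) − J(x_0, (ν^i, γ^{-i})), where J(x_0, γ) = R(x_T, T) + Σ_{k=0}^{T−1} P(x_k, u_k, k). -/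
/-!
Lemma 2 (decomposition condition) implies the game is a constrained dynamic
potential game with potential `(P, R)`.

Setup: `N` agents, horizon `T`.  Agent `i` has state space `Fin (n i) → ℝ`
and action space `Fin (m i) → ℝ`.  The joint state is the dependent product
over agents, each agent's state evolving under its own dynamics `f i` from
the initial state `x0`; the trajectory is determined by the open-loop
strategy profile `γ`.
-/

/-- The joint state trajectory generated from initial state `x0` under
per-agent dynamics `f` and open-loop strategy profile `γ`. -/
noncomputable def traj {N : ℕ} {n m : Fin N → ℕ}
    (f : ∀ i : Fin N, (Fin (n i) → ℝ) → (Fin (m i) → ℝ) → ℕ → (Fin (n i) → ℝ))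
    (x0 : ∀ i, Fin (n i) → ℝ) (γ : ∀ i, ℕ → Fin (m i) → ℝ) :
    ℕ → ∀ i, Fin (n i) → ℝ
  | 0 => x0
  | (k + 1) => fun i => f i (traj f x0 γ k i) (γ i k) k

/-- Cost of agent `i`: terminal cost on its own terminal state plus sum of
running costs over the horizon. -/
noncomputable def agentCost {N : ℕ} {n m : Fin N → ℕ} (T : ℕ)
    (f : ∀ i : Fin N, (Fin (n i) → ℝ) → (Fin (m i) → ℝ) → ℕ → (Fin (n i) → ℝ))
    (x0 : ∀ i, Fin (n i) → ℝ)
    (L : ∀ _ : Fin N, (∀ j, Fin (n j) → ℝ) → (∀ j, Fin (m j) → ℝ) → ℕ → ℝ)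
    (S : ∀ i : Fin N, (Fin (n i) → ℝ) → ℝ)
    (i : Fin N) (γ : ∀ j, ℕ → Fin (m j) → ℝ) : ℝ :=
  S i (traj f x0 γ T i) +
    ∑ k ∈ Finset.range T, L i (traj f x0 γ k) (fun j => γ j k) k

/-- Candidate potential cost: terminal potential `R` on the joint terminal
state plus the sum of the running potential `P` over the horizon. -/
noncomputable def potCost {N : ℕ} {n m : Fin N → ℕ} (T : ℕ)
    (f : ∀ i : Fin N, (Fin (n i) → ℝ) → (Fin (m i) → ℝ) → ℕ → (Fin (n i) → ℝ))
    (x0 : ∀ i, Fin (n i) → ℝ)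
    (P : (∀ j, Fin (n j) → ℝ) → (∀ j, Fin (m j) → ℝ) → ℕ → ℝ)
    (R : (∀ j, Fin (n j) → ℝ) → ℝ)
    (γ : ∀ j, ℕ → Fin (m j) → ℝ) : ℝ :=
  R (traj f x0 γ T) +
    ∑ k ∈ Finset.range T, P (traj f x0 γ k) (fun j => γ j k) k

lemma traj_update_ne {N : ℕ} {n m : Fin N → ℕ}
    (f : ∀ i : Fin N, (Fin (n i) → ℝ) → (Fin (m i) → ℝ) → ℕ → (Fin (n i) → ℝ))
    (x0 : ∀ i, Fin (n i) → ℝ) (γ : ∀ j, ℕ → Fin (m j) → ℝ)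
    (i : Fin N) (ν : ℕ → Fin (m i) → ℝ) (k : ℕ) (j : Fin N) (hj : j ≠ i) :
    traj f x0 (Function.update γ i ν) k j = traj f x0 γ k j := by
  induction k with
  | zero => rfl
  | succ k ih =>
    simp only [traj, ih, Function.update_of_ne hj]

/-- If each running cost decomposes as
`L^i(x,u,k) = P(x,u,k) + Θ^i(x^{-i},u^{-i},k)` and each terminal cost as
`S^i(x^i) = R(x) + Φ^i(x^{-i})`, then the game is a constrained dynamic
potential game with potential `(P, R)`: for every agent `i`, every strategy
profile `γ` (providing `γ^i` and `γ^{-i}`) and every alternative strategy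
`ν` of agent `i`, the change of `J^i` under the unilateral deviation equals
the change of the potential cost `J`. -/
theorem decomposition_implies_potential_game
    {N T : ℕ} (n m : Fin N → ℕ)
    (f : ∀ i : Fin N, (Fin (n i) → ℝ) → (Fin (m i) → ℝ) → ℕ → (Fin (n i) → ℝ))
    (x0 : ∀ i, Fin (n i) → ℝ)
    (L : ∀ _ : Fin N, (∀ j, Fin (n j) → ℝ) → (∀ j, Fin (m j) → ℝ) → ℕ → ℝ)
    (S : ∀ i : Fin N, (Fin (n i) → ℝ) → ℝ)
    (P : (∀ j, Fin (n j) → ℝ) → (∀ j, Fin (m j) → ℝ) → ℕ → ℝ)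
    (R : (∀ j, Fin (n j) → ℝ) → ℝ)
    (Θ : ∀ i : Fin N,
      (∀ j : {j : Fin N // j ≠ i}, Fin (n j.1) → ℝ) →
      (∀ j : {j : Fin N // j ≠ i}, Fin (m j.1) → ℝ) → ℕ → ℝ)
    (Φ : ∀ i : Fin N, (∀ j : {j : Fin N // j ≠ i}, Fin (n j.1) → ℝ) → ℝ)
    (hL : ∀ (i : Fin N) (x : ∀ j, Fin (n j) → ℝ) (u : ∀ j, Fin (m j) → ℝ) (k : ℕ),
      k < T → L i x u k = P x u k + Θ i (fun j => x j.1) (fun j => u j.1) k)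
    (hS : ∀ (i : Fin N) (x : ∀ j, Fin (n j) → ℝ),
      S i (x i) = R x + Φ i (fun j => x j.1)) :
    ∀ (i : Fin N) (γ : ∀ j, ℕ → Fin (m j) → ℝ) (ν : ℕ → Fin (m i) → ℝ),
      agentCost T f x0 L S i γ - agentCost T f x0 L S i (Function.update γ i ν)
        = potCost T f x0 P R γ - potCost T f x0 P R (Function.update γ i ν) := by
  intro i γ ν
  have hu : ∀ k, (fun j : {j : Fin N // j ≠ i} => Function.update γ i ν j.1 k)
      = fun j : {j : Fin N // j ≠ i} => γ j.1 k := by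
    intro k; funext j; rw [Function.update_of_ne j.2]
  have hx : ∀ k, (fun j : {j : Fin N // j ≠ i} => traj f x0 (Function.update γ i ν) k j.1)
      = fun j : {j : Fin N // j ≠ i} => traj f x0 γ k j.1 := by
    intro k; funext j; exact traj_update_ne f x0 γ i ν k j.1 j.2
  simp only [agentCost, potCost, hS]
  rw [Finset.sum_congr rfl (fun k hk => hL i _ _ k (Finset.mem_range.mp hk)),
      Finset.sum_congr rfl (fun k hk => hL i _ _ k (Finset.mem_range.mp hk)),
      Finset.sum_add_distrib, Finset.sum_add_distrib]
  have hΘ : ∀ k ∈ Finset.range T,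
      Θ i (fun j => traj f x0 (Function.update γ i ν) k j.1)
        (fun j => Function.update γ i ν j.1 k) k
      = Θ i (fun j => traj f x0 γ k j.1) (fun j => γ j.1 k) k := by
    intro k _; rw [hx k, hu k]
  rw [Finset.sum_congr rfl hΘ, hx T]
  ring
end

section
/- Under continuous differentiability of all cost functions on ℝ^n × ℝ^m (respectively ℝ^n for the terminal costs), the conditions of Lemma 1 and Lemma 2 are equivalent: for given P and R, there exist functions Θ^i (depending only on (x^{-i}, u^{-i}, k)) and Φ^i (depending only on x^{-i}_T) with L^i(x, u, k) = P(x, u, k) + Θ^i(x^{-i}, u^{-i}, k) and S^i(x_T) = R(x_T) + Φ^i(x^{-i}_T) for all arguments, if and only if for every agent i, every k, and all (x, u): ∂L^i(x, u, k)/∂x^i = ∂P(x, u, k)/∂x^i, ∂L^i(x, u, k)/∂u^i = ∂P(x, u, k)/∂u^i, and ∂S^i(x_T)/∂x^i_T = ∂R(x_T)/∂x^i_T for all x_T. -/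
/-!
Equivalence of the conditions of Lemma 1 and Lemma 2.
-/

lemma const_of_zero_partial {ι : Type*} [Fintype ι] [DecidableEq ι] {E : ι → Type*}
    [∀ j, NormedAddCommGroup (E j)] [∀ j, NormedSpace ℝ (E j)]
    {F : (∀ j, E j) → ℝ} (hF : ContDiff ℝ 1 F) (i : ι)
    (h : ∀ x : ∀ j, E j, fderiv ℝ (fun xi => F (Function.update x i xi)) (x i) = 0)
    (x : ∀ j, E j) : F x = F (Function.update x i 0) := by
  have hdiff : Differentiable ℝ (fun xi : E i => F (Function.update x i xi)) :=
    (hF.differentiable one_ne_zero).comp ((contDiff_update 1 x i).differentiable one_ne_zero)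
  have hz : ∀ xi : E i, fderiv ℝ (fun xi' => F (Function.update x i xi')) xi = 0 := by
    intro xi
    have := h (Function.update x i xi)
    simpa [Function.update_idem] using this
  have := is_const_of_fderiv_eq_zero hdiff hz (x i) 0
  simpa [Function.update_eq_self] using this

theorem decomposition_iff_gradient_conditions
    {N T : ℕ} (n m : Fin N → ℕ)
    (L : ∀ _ : Fin N, (∀ j, Fin (n j) → ℝ) → (∀ j, Fin (m j) → ℝ) → ℕ → ℝ)
    (S : ∀ _ : Fin N, (∀ j, Fin (n j) → ℝ) → ℝ)
    (P : (∀ j, Fin (n j) → ℝ) → (∀ j, Fin (m j) → ℝ) → ℕ → ℝ)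
    (R : (∀ j, Fin (n j) → ℝ) → ℝ)
    (hLsmooth : ∀ (i : Fin N) (k : ℕ), k < T →
      ContDiff ℝ 1 (fun p : (∀ j, Fin (n j) → ℝ) × (∀ j, Fin (m j) → ℝ) => L i p.1 p.2 k))
    (hPsmooth : ∀ k : ℕ, k < T →
      ContDiff ℝ 1 (fun p : (∀ j, Fin (n j) → ℝ) × (∀ j, Fin (m j) → ℝ) => P p.1 p.2 k))
    (hSsmooth : ∀ i : Fin N, ContDiff ℝ 1 (S i))
    (hRsmooth : ContDiff ℝ 1 R) :
    ((∃ (Θ : ∀ i : Fin N,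
          (∀ j : {j : Fin N // j ≠ i}, Fin (n j.1) → ℝ) →
          (∀ j : {j : Fin N // j ≠ i}, Fin (m j.1) → ℝ) → ℕ → ℝ)
        (Φ : ∀ i : Fin N, (∀ j : {j : Fin N // j ≠ i}, Fin (n j.1) → ℝ) → ℝ),
        (∀ (i : Fin N) (x : ∀ j, Fin (n j) → ℝ) (u : ∀ j, Fin (m j) → ℝ) (k : ℕ),
          k < T → L i x u k = P x u k + Θ i (fun j => x j.1) (fun j => u j.1) k) ∧
        (∀ (i : Fin N) (x : ∀ j, Fin (n j) → ℝ),
          S i x = R x + Φ i (fun j => x j.1)))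
      ↔
      ((∀ (i : Fin N) (x : ∀ j, Fin (n j) → ℝ) (u : ∀ j, Fin (m j) → ℝ) (k : ℕ),
          k < T →
          fderiv ℝ (fun xi : Fin (n i) → ℝ => L i (Function.update x i xi) u k) (x i)
            = fderiv ℝ (fun xi : Fin (n i) → ℝ => P (Function.update x i xi) u k) (x i)) ∧
        (∀ (i : Fin N) (x : ∀ j, Fin (n j) → ℝ) (u : ∀ j, Fin (m j) → ℝ) (k : ℕ),
          k < T →
          fderiv ℝ (fun ui : Fin (m i) → ℝ => L i x (Function.update u i ui) k) (u i)
            = fderiv ℝ (fun ui : Fin (m i) → ℝ => P x (Function.update u i ui) k) (u i)) ∧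
        (∀ (i : Fin N) (x : ∀ j, Fin (n j) → ℝ),
          fderiv ℝ (fun xi : Fin (n i) → ℝ => S i (Function.update x i xi)) (x i)
            = fderiv ℝ (fun xi : Fin (n i) → ℝ => R (Function.update x i xi)) (x i)))) := by
  constructor
  · rintro ⟨Θ, Φ, hLP, hSR⟩
    have hres : ∀ (i : Fin N) (x : ∀ j, Fin (n j) → ℝ) (xi : Fin (n i) → ℝ),
        (fun j : {j : Fin N // j ≠ i} => Function.update x i xi j.1)
          = fun j : {j : Fin N // j ≠ i} => x j.1 := by
      intro i x xi
      funext j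
      exact Function.update_of_ne j.2 _ _
    have hresu : ∀ (i : Fin N) (u : ∀ j, Fin (m j) → ℝ) (ui : Fin (m i) → ℝ),
        (fun j : {j : Fin N // j ≠ i} => Function.update u i ui j.1)
          = fun j : {j : Fin N // j ≠ i} => u j.1 := by
      intro i u ui
      funext j
      exact Function.update_of_ne j.2 _ _
    refine ⟨?_, ?_, ?_⟩
    · intro i x u k hk
      have : (fun xi : Fin (n i) → ℝ => L i (Function.update x i xi) u k)
          = fun xi => P (Function.update x i xi) u k
              + Θ i (fun j => x j.1) (fun j => u j.1) k := by
        funext xi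
        rw [hLP i _ u k hk, hres i x xi]
      rw [this, fderiv_add_const]
    · intro i x u k hk
      have : (fun ui : Fin (m i) → ℝ => L i x (Function.update u i ui) k)
          = fun ui => P x (Function.update u i ui) k
              + Θ i (fun j => x j.1) (fun j => u j.1) k := by
        funext ui
        rw [hLP i x _ k hk, hresu i u ui]
      rw [this, fderiv_add_const]
    · intro i x
      have : (fun xi : Fin (n i) → ℝ => S i (Function.update x i xi))
          = fun xi => R (Function.update x i xi) + Φ i (fun j => x j.1) := by
        funext xi
        rw [hSR i _, hres i x xi]
      rw [this, fderiv_add_const]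
  · rintro ⟨hx, hu, hS⟩
    classical
    -- extension of a reduced profile by zero in block i
    set extx : ∀ i : Fin N, (∀ j : {j : Fin N // j ≠ i}, Fin (n j.1) → ℝ) →
        (∀ j, Fin (n j) → ℝ) :=
      fun i xo j => if h : j = i then 0 else xo ⟨j, h⟩ with hextx
    set extu : ∀ i : Fin N, (∀ j : {j : Fin N // j ≠ i}, Fin (m j.1) → ℝ) →
        (∀ j, Fin (m j) → ℝ) :=
      fun i uo j => if h : j = i then 0 else uo ⟨j, h⟩ with hextu
    have hextx_res : ∀ (i : Fin N) (x : ∀ j, Fin (n j) → ℝ),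
        extx i (fun j => x j.1) = Function.update x i 0 := by
      intro i x
      funext j
      by_cases h : j = i
      · subst h; simp [hextx]
      · simp [hextx, h, Function.update_of_ne h]
    have hextu_res : ∀ (i : Fin N) (u : ∀ j, Fin (m j) → ℝ),
        extu i (fun j => u j.1) = Function.update u i 0 := by
      intro i u
      funext j
      by_cases h : j = i
      · subst h; simp [hextu]
      · simp [hextu, h, Function.update_of_ne h]
    refine ⟨fun i xo uo k => L i (extx i xo) (extu i uo) k - P (extx i xo) (extu i uo) k,
      fun i xo => S i (extx i xo) - R (extx i xo), ?_, ?_⟩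
    · intro i x u k hk
      have hLd := hLsmooth i k hk
      have hPd := hPsmooth k hk
      -- step 1: independence in x-block i (for any fixed u)
      have step1 : ∀ u : ∀ j, Fin (m j) → ℝ,
          L i x u k - P x u k
            = L i (Function.update x i 0) u k - P (Function.update x i 0) u k := by
        intro u
        have hF : ContDiff ℝ 1 (fun x : ∀ j, Fin (n j) → ℝ => L i x u k - P x u k) := by
          have h1 : ContDiff ℝ 1 (fun x : ∀ j, Fin (n j) → ℝ => L i x u k) :=
            hLd.comp (contDiff_id.prodMk contDiff_const)
          have h2 : ContDiff ℝ 1 (fun x : ∀ j, Fin (n j) → ℝ => P x u k) :=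
            hPd.comp (contDiff_id.prodMk contDiff_const)
          exact h1.sub h2
        refine const_of_zero_partial hF i (fun x' => ?_) x
        have hdL : Differentiable ℝ
            (fun xi : Fin (n i) → ℝ => L i (Function.update x' i xi) u k) :=
          (hLd.differentiable one_ne_zero).comp
            (((contDiff_update 1 x' i).differentiable one_ne_zero).prodMk
              (differentiable_const u))
        have hdP : Differentiable ℝ
            (fun xi : Fin (n i) → ℝ => P (Function.update x' i xi) u k) :=
          (hPd.differentiable one_ne_zero).comp
            (((contDiff_update 1 x' i).differentiable one_ne_zero).prodMk
              (differentiable_const u))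
        rw [fderiv_fun_sub (hdL (x' i)) (hdP (x' i)), hx i x' u k hk, sub_self]
      -- step 2: independence in u-block i (at x replaced by update x i 0)
      have step2 :
          L i (Function.update x i 0) u k - P (Function.update x i 0) u k
            = L i (Function.update x i 0) (Function.update u i 0) k
              - P (Function.update x i 0) (Function.update u i 0) k := by
        set x0 := Function.update x i 0
        have hF : ContDiff ℝ 1 (fun u : ∀ j, Fin (m j) → ℝ => L i x0 u k - P x0 u k) := by
          have h1 : ContDiff ℝ 1 (fun u : ∀ j, Fin (m j) → ℝ => L i x0 u k) :=
            hLd.comp (contDiff_const.prodMk contDiff_id)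
          have h2 : ContDiff ℝ 1 (fun u : ∀ j, Fin (m j) → ℝ => P x0 u k) :=
            hPd.comp (contDiff_const.prodMk contDiff_id)
          exact h1.sub h2
        refine const_of_zero_partial hF i (fun u' => ?_) u
        have hdL : Differentiable ℝ
            (fun ui : Fin (m i) → ℝ => L i x0 (Function.update u' i ui) k) :=
          (hLd.differentiable one_ne_zero).comp
            ((differentiable_const x0).prodMk
              ((contDiff_update 1 u' i).differentiable one_ne_zero))
        have hdP : Differentiable ℝ
            (fun ui : Fin (m i) → ℝ => P x0 (Function.update u' i ui) k) :=
          (hPd.differentiable one_ne_zero).comp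
            ((differentiable_const x0).prodMk
              ((contDiff_update 1 u' i).differentiable one_ne_zero))
        rw [fderiv_fun_sub (hdL (u' i)) (hdP (u' i)), hu i x0 u' k hk, sub_self]
      have key := (step1 u).trans step2
      dsimp only
      rw [hextx_res i x, hextu_res i u]
      linarith [key]
    · intro i x
      have step : S i x - R x
          = S i (Function.update x i 0) - R (Function.update x i 0) := by
        refine const_of_zero_partial ((hSsmooth i).sub hRsmooth) i (fun x' => ?_) x
        have hdL : Differentiable ℝ
            (fun xi : Fin (n i) → ℝ => S i (Function.update x' i xi)) :=
          ((hSsmooth i).differentiable one_ne_zero).comp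
            ((contDiff_update 1 x' i).differentiable one_ne_zero)
        have hdP : Differentiable ℝ
            (fun xi : Fin (n i) → ℝ => R (Function.update x' i xi)) :=
          (hRsmooth.differentiable one_ne_zero).comp
            ((contDiff_update 1 x' i).differentiable one_ne_zero)
        rw [fderiv_fun_sub (hdL (x' i)) (hdP (x' i)), hS i x', sub_self]
      dsimp only
      rw [hextx_res i x]
      linarith [step]
end

section
/- Assume all cost, dynamics, and constraint functions are continuously differentiable, and suppose the gradient-equality conditions hold: for every agent i, every k = 0,...,T−1, and all (x, u) ∈ ℝ^n × ℝ^m, ∂L^i(x, u, k)/∂x^i = ∂P(x, u, k)/∂x^i, ∂L^i(x, u, k)/∂u^i = ∂P(x, u, k)/∂u^i, and ∂S^i(x_T)/∂x^i_T = ∂R(x_T)/∂x^i_T for all x_T. Let (x_k, u_k)_{k}, together with multipliers ξ_k ∈ ℝ^n (k = 0,...,T−1) and δ_k ∈ ℝ^c (k = 0,...,T), satisfy the KKT conditions of the potential optimal control problem: for every agent block i and every k, ∂P(x_k,u_k,k)/∂x^i_k + ξ_k^⊤ ∂f(x_k,u_k,k)/∂x^i_k + δ_k^⊤ ∂g(x_k,u_k,k)/∂x^i_k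 − ξ_{k−1}^i = 0, ∂P(x_k,u_k,k)/∂u^i_k + ξ_k^⊤ ∂f(x_k,u_k,k)/∂u^i_k + δ_k^⊤ ∂g(x_k,u_k,k)/∂u^i_k = 0, x_{k+1} = f(x_k,u_k,k), g(x_k,u_k,k) ≤ 0, ∂R(x_T)/∂x^i_T + δ_T^⊤ ∂g(x_T,T)/∂x^i_T = 0, g(x_T,T) ≤ 0, δ_k ≤ 0, and δ_k^⊤ g(x_k,u_k,k) = 0. Then, setting λ^i_k := ξ_k and μ^i_k := δ_k for every agent i, the same trajectory (x_k, u_k)_k together with (λ^i_k, μ^i_k) satisfies the KKT conditions of each agent i's constrained optimal control problem: ∂L^i(x_k,u_k,k)/∂x^i_k + (λ^i_k)^⊤ ∂f(x_k,u_k,k)/∂x^i_k + (μ^i_k)^⊤ ∂g(x_k,u_k,k)/∂x^i_k − (λ^i_{k−1})^i = 0, ∂L^i(x_k,u_k,k)/∂u^i_k + (λ^i_k)^⊤ ∂f(x_k,u_k,k)/∂u^i_k + (μ^i_k)^⊤ ∂g(x_k,u_k,k)/∂u^i_k = 0, ∂S^i(x_T)/∂x^i_T + (μ^i_T)^⊤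 ∂g(x_T,T)/∂x^i_T = 0, μ^i_k ≤ 0, and (μ^i_k)^⊤ g(x_k,u_k,k) = 0 for all k. -/
/-!
KKT transfer: under the gradient-equality conditions between each agent's
costs `(L^i, S^i)` and the candidate potentials `(P, R)`, any trajectory and
multipliers satisfying the KKT conditions of the potential optimal control
problem also satisfy, with `λ^i_k := ξ_k` and `μ^i_k := δ_k`, the KKT
conditions of every agent's constrained optimal control problem.

Setup: joint state space `∀ j, Fin (n j) → ℝ` (`ℝ^n` partitioned into agent
blocks), joint action space `∀ j, Fin (m j) → ℝ`, joint dynamics `f`,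
running constraints `g` valued in `ℝ^c`, terminal constraint `gT`.  Partial
derivatives with respect to agent `i`'s blocks are formalized as Fréchet
derivatives of the maps obtained by updating the `i`-th block.  The term
`ξ_{k−1}` is absent at `k = 0` (encoded by an `if k = 0` guard).
-/

/-- Dot product on the joint state space `ℝ^n = ∀ j, Fin (n j) → ℝ`. -/
noncomputable def sdot {N : ℕ} {n : Fin N → ℕ} (a b : ∀ j, Fin (n j) → ℝ) : ℝ :=
  ∑ j, ∑ l, a j l * b j l

theorem potential_KKT_implies_agent_KKT
    {N T c : ℕ} (n m : Fin N → ℕ)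
    -- joint dynamics and constraints
    (f : (∀ j, Fin (n j) → ℝ) → (∀ j, Fin (m j) → ℝ) → ℕ → (∀ j, Fin (n j) → ℝ))
    (g : (∀ j, Fin (n j) → ℝ) → (∀ j, Fin (m j) → ℝ) → ℕ → Fin c → ℝ)
    (gT : (∀ j, Fin (n j) → ℝ) → Fin c → ℝ)
    -- costs and candidate potentials
    (L : ∀ _ : Fin N, (∀ j, Fin (n j) → ℝ) → (∀ j, Fin (m j) → ℝ) → ℕ → ℝ)
    (S : ∀ _ : Fin N, (∀ j, Fin (n j) → ℝ) → ℝ)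
    (P : (∀ j, Fin (n j) → ℝ) → (∀ j, Fin (m j) → ℝ) → ℕ → ℝ)
    (R : (∀ j, Fin (n j) → ℝ) → ℝ)
    -- continuous differentiability of all cost, dynamics, constraint functions
    (hLsmooth : ∀ (i : Fin N) (k : ℕ), k < T →
      ContDiff ℝ 1 (fun p : (∀ j, Fin (n j) → ℝ) × (∀ j, Fin (m j) → ℝ) => L i p.1 p.2 k))
    (hSsmooth : ∀ i : Fin N, ContDiff ℝ 1 (S i))
    (hPsmooth : ∀ k : ℕ, k < T →
      ContDiff ℝ 1 (fun p : (∀ j, Fin (n j) → ℝ) × (∀ j, Fin (m j) → ℝ) => P p.1 p.2 k))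
    (hRsmooth : ContDiff ℝ 1 R)
    (hfsmooth : ∀ k : ℕ, k < T →
      ContDiff ℝ 1 (fun p : (∀ j, Fin (n j) → ℝ) × (∀ j, Fin (m j) → ℝ) => f p.1 p.2 k))
    (hgsmooth : ∀ k : ℕ, k < T →
      ContDiff ℝ 1 (fun p : (∀ j, Fin (n j) → ℝ) × (∀ j, Fin (m j) → ℝ) => g p.1 p.2 k))
    (hgTsmooth : ContDiff ℝ 1 gT)
    -- gradient-equality conditions
    (hgradx : ∀ (i : Fin N) (x : ∀ j, Fin (n j) → ℝ) (u : ∀ j, Fin (m j) → ℝ) (k : ℕ),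
      k < T →
      fderiv ℝ (fun xi : Fin (n i) → ℝ => L i (Function.update x i xi) u k) (x i)
        = fderiv ℝ (fun xi : Fin (n i) → ℝ => P (Function.update x i xi) u k) (x i))
    (hgradu : ∀ (i : Fin N) (x : ∀ j, Fin (n j) → ℝ) (u : ∀ j, Fin (m j) → ℝ) (k : ℕ),
      k < T →
      fderiv ℝ (fun ui : Fin (m i) → ℝ => L i x (Function.update u i ui) k) (u i)
        = fderiv ℝ (fun ui : Fin (m i) → ℝ => P x (Function.update u i ui) k) (u i))
    (hgradT : ∀ (i : Fin N) (x : ∀ j, Fin (n j) → ℝ),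
      fderiv ℝ (fun xi : Fin (n i) → ℝ => S i (Function.update x i xi)) (x i)
        = fderiv ℝ (fun xi : Fin (n i) → ℝ => R (Function.update x i xi)) (x i))
    -- a trajectory and multipliers
    (x : ℕ → ∀ j, Fin (n j) → ℝ) (u : ℕ → ∀ j, Fin (m j) → ℝ)
    (ξ : ℕ → ∀ j, Fin (n j) → ℝ) (δ : ℕ → Fin c → ℝ)
    -- KKT conditions of the potential optimal control problem:
    -- stationarity in each agent's state block
    (hstatx : ∀ (i : Fin N) (k : ℕ), k < T → ∀ v : Fin (n i) → ℝ,
      fderiv ℝ (fun xi : Fin (n i) → ℝ => P (Function.update (x k) i xi) (u k) k) (x k i) v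
        + sdot (ξ k)
            (fderiv ℝ (fun xi : Fin (n i) → ℝ =>
              f (Function.update (x k) i xi) (u k) k) (x k i) v)
        + (∑ l, δ k l *
            fderiv ℝ (fun xi : Fin (n i) → ℝ =>
              g (Function.update (x k) i xi) (u k) k) (x k i) v l)
        - (if k = 0 then 0 else ∑ l, ξ (k - 1) i l * v l) = 0)
    -- stationarity in each agent's action block
    (hstatu : ∀ (i : Fin N) (k : ℕ), k < T → ∀ v : Fin (m i) → ℝ,
      fderiv ℝ (fun ui : Fin (m i) → ℝ => P (x k) (Function.update (u k) i ui) k) (u k i) v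
        + sdot (ξ k)
            (fderiv ℝ (fun ui : Fin (m i) → ℝ =>
              f (x k) (Function.update (u k) i ui) k) (u k i) v)
        + (∑ l, δ k l *
            fderiv ℝ (fun ui : Fin (m i) → ℝ =>
              g (x k) (Function.update (u k) i ui) k) (u k i) v l) = 0)
    -- primal feasibility
    (hdyn : ∀ k : ℕ, k < T → x (k + 1) = f (x k) (u k) k)
    (hgfeas : ∀ k : ℕ, k < T → ∀ l : Fin c, g (x k) (u k) k l ≤ 0)
    (hgTfeas : ∀ l : Fin c, gT (x T) l ≤ 0)
    -- terminal stationarity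
    (hstatT : ∀ (i : Fin N) (v : Fin (n i) → ℝ),
      fderiv ℝ (fun xi : Fin (n i) → ℝ => R (Function.update (x T) i xi)) (x T i) v
        + (∑ l, δ T l *
            fderiv ℝ (fun xi : Fin (n i) → ℝ =>
              gT (Function.update (x T) i xi)) (x T i) v l) = 0)
    -- multiplier sign and complementary slackness
    (hsign : ∀ k : ℕ, k ≤ T → ∀ l : Fin c, δ k l ≤ 0)
    (hcomp : ∀ k : ℕ, k < T → ∑ l, δ k l * g (x k) (u k) k l = 0)
    (hcompT : ∑ l, δ T l * gT (x T) l = 0) :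
    -- Conclusion: with λ^i_k := ξ_k and μ^i_k := δ_k, the same trajectory and
    -- multipliers satisfy the KKT conditions of every agent's problem.
    ∀ i : Fin N,
      (∀ k : ℕ, k < T → ∀ v : Fin (n i) → ℝ,
        fderiv ℝ (fun xi : Fin (n i) → ℝ =>
            L i (Function.update (x k) i xi) (u k) k) (x k i) v
          + sdot (ξ k)
              (fderiv ℝ (fun xi : Fin (n i) → ℝ =>
                f (Function.update (x k) i xi) (u k) k) (x k i) v)
          + (∑ l, δ k l *
              fderiv ℝ (fun xi : Fin (n i) → ℝ =>
                g (Function.update (x k) i xi) (u k) k) (x k i) v l)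
          - (if k = 0 then 0 else ∑ l, ξ (k - 1) i l * v l) = 0) ∧
      (∀ k : ℕ, k < T → ∀ v : Fin (m i) → ℝ,
        fderiv ℝ (fun ui : Fin (m i) → ℝ =>
            L i (x k) (Function.update (u k) i ui) k) (u k i) v
          + sdot (ξ k)
              (fderiv ℝ (fun ui : Fin (m i) → ℝ =>
                f (x k) (Function.update (u k) i ui) k) (u k i) v)
          + (∑ l, δ k l *
              fderiv ℝ (fun ui : Fin (m i) → ℝ =>
                g (x k) (Function.update (u k) i ui) k) (u k i) v l) = 0) ∧
      (∀ v : Fin (n i) → ℝ,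
        fderiv ℝ (fun xi : Fin (n i) → ℝ => S i (Function.update (x T) i xi)) (x T i) v
          + (∑ l, δ T l *
              fderiv ℝ (fun xi : Fin (n i) → ℝ =>
                gT (Function.update (x T) i xi)) (x T i) v l) = 0) ∧
      (∀ k : ℕ, k ≤ T → ∀ l : Fin c, δ k l ≤ 0) ∧
      (∀ k : ℕ, k < T → ∑ l, δ k l * g (x k) (u k) k l = 0) ∧
      (∑ l, δ T l * gT (x T) l = 0) := by
  intro i
  refine ⟨?_, ?_, ?_, hsign, hcomp, hcompT⟩
  · intro k hk v
    rw [hgradx i (x k) (u k) k hk]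
    exact hstatx i k hk v
  · intro k hk v
    rw [hgradu i (x k) (u k) k hk]
    exact hstatu i k hk v
  · intro v
    rw [hgradT i (x T)]
    exact hstatT i v
end
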